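/- Let r₀ > 0, D₂ > 0 and fix r̄ ≥ r₀. Then the function t ↦ ∫₀^{r̄} f_{r,t}(x) dx is nonincreasing on (0, ∞); equivalently, if Z_t = μ + √(2·D₂·t)·W with W a standard Gaussian vector in ℝ³ and ‖μ‖ = r₀, the probability P( ‖Z_t‖ ≤ r̄ ) is a nonincreasing function of t > 0. -/

import Mathlib

open MeasureTheory Real

/-- The density of the distance between transmitter and receiver at time `t`. -/
noncomputable def fdist (r₀ D₂ t x : ℝ) : ℝ :=
  if 0 < x then
    x / (r₀ * Real.sqrt (π * D₂ * t)) * Real.exp (-(x ^ 2 + r₀ ^ 2) / (4 * D₂ * t))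
      * Real.sinh (r₀ * x / (2 * D₂ * t))
  else 0

noncomputable def Eint (y : ℝ) : ℝ := ∫ v in (0:ℝ)..y, Real.exp (-v^2)

lemma Eint_hasDerivAt (y : ℝ) : HasDerivAt Eint (Real.exp (-y^2)) y := by
  have hc : Continuous fun v : ℝ => Real.exp (-v^2) := by fun_prop
  exact (intervalIntegral.integral_hasStrictDerivAt_right
    (hc.intervalIntegrable _ _) (hc.stronglyMeasurableAtFilter _ _) hc.continuousAt).hasDerivAt

lemma key_ineq {a b : ℝ} (ha : 0 ≤ a) (hab : a ≤ b) :
    (1 + b*(a+b)) * Real.exp (-b^2) ≤ (1 + a*(a+b)) * Real.exp (-a^2) := by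
  have h1 : (1 + (b^2 - a^2)) ≤ Real.exp (b^2 - a^2) := by
    have := Real.add_one_le_exp (b^2-a^2); linarith
  have heq : Real.exp (-a^2) = Real.exp (-b^2) * Real.exp (b^2 - a^2) := by
    rw [← Real.exp_add]; ring_nf
  have hepos : 0 < Real.exp (-b^2) := Real.exp_pos _
  rw [heq]
  have h2 : (1 + b*(a+b)) ≤ (1 + a*(a+b)) * Real.exp (b^2-a^2) := by
    calc (1 + b*(a+b)) ≤ (1+a*(a+b)) * (1 + (b^2-a^2)) := by
          nlinarith [mul_nonneg (mul_nonneg ha (sub_nonneg.2 hab))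
            (mul_nonneg (add_nonneg ha (ha.trans hab)) (add_nonneg ha (ha.trans hab)))]
    _ ≤ _ := by
        apply mul_le_mul_of_nonneg_left h1 (by nlinarith)
  calc (1 + b*(a+b)) * Real.exp (-b^2) ≤ ((1+a*(a+b)) * Real.exp (b^2-a^2)) * Real.exp (-b^2) :=
        mul_le_mul_of_nonneg_right h2 hepos.le
  _ = (1+a*(a+b)) * (Real.exp (-b^2) * Real.exp (b^2-a^2)) := by ring

noncomputable def Hfun (r₀ σ x : ℝ) : ℝ :=
  σ / (2 * r₀ * Real.sqrt π) * (Real.exp (-((x+r₀)/σ)^2) - Real.exp (-((x-r₀)/σ)^2))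
    + (Real.sqrt π)⁻¹ * (Eint ((x-r₀)/σ) + Eint ((x+r₀)/σ))

lemma Hfun_hasDerivAt_x {r₀ σ : ℝ} (hr₀ : r₀ ≠ 0) (hσ : 0 < σ) (x : ℝ) :
    HasDerivAt (Hfun r₀ σ)
      (x / (r₀ * Real.sqrt π * σ) * (Real.exp (-((x-r₀)/σ)^2) - Real.exp (-((x+r₀)/σ)^2))) x := by
  have hπ : Real.sqrt π ≠ 0 := ne_of_gt (Real.sqrt_pos.2 Real.pi_pos)
  have hi1 : HasDerivAt (fun x : ℝ => (x - r₀)/σ) σ⁻¹ x := by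
    simpa using ((hasDerivAt_id x).sub_const r₀).div_const σ
  have hi2 : HasDerivAt (fun x : ℝ => (x + r₀)/σ) σ⁻¹ x := by
    simpa using ((hasDerivAt_id x).add_const r₀).div_const σ
  have hs1 : HasDerivAt (fun x : ℝ => -((x - r₀)/σ)^2) (-(2*((x-r₀)/σ)*σ⁻¹)) x := by
    have := (hi1.fun_pow 2).fun_neg
    exact this.congr_deriv (by ring)
  have hs2 : HasDerivAt (fun x : ℝ => -((x + r₀)/σ)^2) (-(2*((x+r₀)/σ)*σ⁻¹)) x := by
    have := (hi2.fun_pow 2).fun_neg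
    exact this.congr_deriv (by ring)
  have he1 := hs1.exp
  have he2 := hs2.exp
  have hE1 : HasDerivAt (fun x : ℝ => Eint ((x - r₀)/σ)) (Real.exp (-((x-r₀)/σ)^2) * σ⁻¹) x :=
    by have := (Eint_hasDerivAt ((x - r₀)/σ)).comp x hi1; exact this
  have hE2 : HasDerivAt (fun x : ℝ => Eint ((x + r₀)/σ)) (Real.exp (-((x+r₀)/σ)^2) * σ⁻¹) x :=
    by have := (Eint_hasDerivAt ((x + r₀)/σ)).comp x hi2; exact this
  have h := (((he2.fun_sub he1).const_mul (σ / (2 * r₀ * Real.sqrt π)))).fun_add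
    ((hE1.fun_add hE2).const_mul (Real.sqrt π)⁻¹)
  refine h.congr_deriv ?_
  field_simp
  ring

lemma integral_eq {r₀ D₂ rbar t : ℝ} (hr₀ : 0 < r₀) (hD₂ : 0 < D₂) (hrbar : r₀ ≤ rbar)
    (ht : 0 < t) :
    ∫ x in (0:ℝ)..rbar, fdist r₀ D₂ t x
      = Hfun r₀ (Real.sqrt (4*D₂*t)) rbar - Hfun r₀ (Real.sqrt (4*D₂*t)) 0 := by
  set σ := Real.sqrt (4*D₂*t) with hσdef
  have hσpos : 0 < σ := Real.sqrt_pos.2 (by positivity)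
  have hσ2 : σ^2 = 4*D₂*t := Real.sq_sqrt (by positivity)
  have hπ : (0:ℝ) < Real.sqrt π := Real.sqrt_pos.2 Real.pi_pos
  have hsqrt : Real.sqrt (π*D₂*t) = Real.sqrt π * σ / 2 := by
    have h : π*D₂*t = (Real.sqrt π * σ / 2)^2 := by
      rw [div_pow, mul_pow, hσ2, Real.sq_sqrt Real.pi_pos.le]; ring
    rw [h, Real.sqrt_sq (by positivity)]
  have hφeq : ∀ x ∈ Set.uIcc (0:ℝ) rbar, fdist r₀ D₂ t x
      = x / (r₀ * Real.sqrt π * σ) * (Real.exp (-((x-r₀)/σ)^2) - Real.exp (-((x+r₀)/σ)^2)) := by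
    intro x hx
    rcases eq_or_lt_of_le ((Set.uIcc_of_le (le_trans hr₀.le hrbar)) ▸ hx).1 with h0 | h0
    · simp [fdist, ← h0]
    · rw [fdist, if_pos h0, hsqrt, Real.sinh_eq]
      rw [show -((x-r₀)/σ)^2 = -(x^2+r₀^2)/(4*D₂*t) + r₀*x/(2*D₂*t) by
        rw [div_pow, hσ2]; field_simp; ring]
      rw [show -((x+r₀)/σ)^2 = -(x^2+r₀^2)/(4*D₂*t) + -(r₀*x/(2*D₂*t)) by
        rw [div_pow, hσ2]; field_simp; ring]
      rw [Real.exp_add, Real.exp_add]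
      field_simp
  rw [intervalIntegral.integral_congr hφeq]
  exact intervalIntegral.integral_eq_sub_of_hasDerivAt
    (fun x _ => Hfun_hasDerivAt_x hr₀.ne' hσpos x)
    (Continuous.intervalIntegrable (by fun_prop) _ _)

noncomputable def DH (r₀ x σ : ℝ) : ℝ :=
  (2*r₀*Real.sqrt π)⁻¹ * ((Real.exp (-((x+r₀)/σ)^2) - Real.exp (-((x-r₀)/σ)^2))
      + 2*(((x+r₀)/σ)^2 * Real.exp (-((x+r₀)/σ)^2) - ((x-r₀)/σ)^2 * Real.exp (-((x-r₀)/σ)^2)))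
    - (Real.sqrt π * σ)⁻¹ * (((x-r₀)/σ) * Real.exp (-((x-r₀)/σ)^2)
      + ((x+r₀)/σ) * Real.exp (-((x+r₀)/σ)^2))

lemma inv_hasDerivAt {σ : ℝ} (hσ : σ ≠ 0) (k : ℝ) :
    HasDerivAt (fun σ : ℝ => k/σ) (-(k/σ^2)) σ := by
  have := (hasDerivAt_inv hσ).const_mul k
  simp only [div_eq_mul_inv]
  refine this.congr_deriv ?_
  ring

lemma exp_hasDerivAt {σ : ℝ} (hσ : σ ≠ 0) (k : ℝ) :
    HasDerivAt (fun σ : ℝ => Real.exp (-(k/σ)^2))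
      (Real.exp (-(k/σ)^2) * (2*(k/σ)*(k/σ^2))) σ := by
  have h : HasDerivAt (fun σ : ℝ => -(k/σ)^2) (2*(k/σ)*(k/σ^2)) σ := by
    have := ((inv_hasDerivAt hσ k).fun_pow 2).fun_neg
    exact this.congr_deriv (by ring)
  exact h.exp

lemma EintC_hasDerivAt {σ : ℝ} (hσ : σ ≠ 0) (k : ℝ) :
    HasDerivAt (fun σ : ℝ => Eint (k/σ)) (Real.exp (-(k/σ)^2) * (-(k/σ^2))) σ :=
  by have := (Eint_hasDerivAt (k/σ)).comp σ (inv_hasDerivAt hσ k); exact this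

lemma Hfun_hasDerivAt_sigma {r₀ : ℝ} (hr₀ : r₀ ≠ 0) (x : ℝ) {σ : ℝ} (hσ : 0 < σ) :
    HasDerivAt (fun σ => Hfun r₀ σ x) (DH r₀ x σ) σ := by
  have hπ : Real.sqrt π ≠ 0 := ne_of_gt (Real.sqrt_pos.2 Real.pi_pos)
  have h1 := ((hasDerivAt_id σ).div_const (2 * r₀ * Real.sqrt π)).fun_mul
    ((exp_hasDerivAt hσ.ne' (x+r₀)).fun_sub (exp_hasDerivAt hσ.ne' (x-r₀)))
  have h2 := ((EintC_hasDerivAt hσ.ne' (x-r₀)).fun_add (EintC_hasDerivAt hσ.ne' (x+r₀))).const_mul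
    (Real.sqrt π)⁻¹
  have h := h1.fun_add h2
  unfold Hfun DH
  refine h.congr_deriv ?_
  simp only [id]
  field_simp
  ring

lemma DH_zero (r₀ σ : ℝ) : DH r₀ 0 σ = 0 := by
  unfold DH
  rw [show ((0:ℝ)+r₀)/σ = r₀/σ by ring, show ((0:ℝ)-r₀)/σ = -(r₀/σ) by ring]
  simp only [neg_sq]
  ring

lemma DH_nonpos {r₀ rbar σ : ℝ} (hr₀ : 0 < r₀) (hrbar : r₀ ≤ rbar) (hσ : 0 < σ) :
    DH r₀ rbar σ ≤ 0 := by
  have hπ : (0:ℝ) < Real.sqrt π := Real.sqrt_pos.2 Real.pi_pos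
  set a := (rbar - r₀)/σ with hadef
  set b := (rbar + r₀)/σ with hbdef
  have ha : 0 ≤ a := div_nonneg (by linarith) hσ.le
  have hab : a ≤ b := by
    rw [hadef, hbdef]
    gcongr
    linarith
  have hsa : σ * a = rbar - r₀ := by rw [hadef]; field_simp
  have hsb : σ * b = rbar + r₀ := by rw [hbdef]; field_simp
  have hrw : DH r₀ rbar σ = (2*r₀*σ*Real.sqrt π)⁻¹ *
      (σ*((1+2*b^2)*Real.exp (-b^2) - (1+2*a^2)*Real.exp (-a^2))
        - 2*r₀*(a*Real.exp (-a^2) + b*Real.exp (-b^2))) := by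
    unfold DH
    rw [← hadef, ← hbdef]
    field_simp
    ring
  rw [hrw]
  apply mul_nonpos_of_nonneg_of_nonpos (by positivity)
  have h2r : 2*r₀ = σ*b - σ*a := by rw [hsa, hsb]; ring
  rw [h2r]
  nlinarith [mul_le_mul_of_nonneg_left (key_ineq ha hab) hσ.le]

noncomputable def Phi (r₀ rbar σ : ℝ) : ℝ := Hfun r₀ σ rbar - Hfun r₀ σ 0

lemma Phi_anti {r₀ rbar : ℝ} (hr₀ : 0 < r₀) (hrbar : r₀ ≤ rbar) :
    AntitoneOn (Phi r₀ rbar) (Set.Ioi 0) := by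
  have hd : ∀ σ ∈ Set.Ioi (0:ℝ),
      HasDerivAt (Phi r₀ rbar) (DH r₀ rbar σ - DH r₀ 0 σ) σ := fun σ hσ =>
    (Hfun_hasDerivAt_sigma hr₀.ne' rbar hσ).sub (Hfun_hasDerivAt_sigma hr₀.ne' 0 hσ)
  apply antitoneOn_of_deriv_nonpos (convex_Ioi 0)
  · exact fun σ hσ => ((hd σ hσ).differentiableAt.continuousAt).continuousWithinAt
  · rw [interior_Ioi]
    exact fun σ hσ => (hd σ hσ).differentiableAt.differentiableWithinAt
  · rw [interior_Ioi]
    intro σ hσ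
    rw [(hd σ hσ).deriv, DH_zero, sub_zero]
    exact DH_nonpos hr₀ hrbar hσ

/-- The probability that the transceiver distance does not exceed `r̄ ≥ r₀` is a
nonincreasing function of time. -/
theorem distance_cdf_antitone (r₀ D₂ rbar : ℝ) (hr₀ : 0 < r₀) (hD₂ : 0 < D₂)
    (hrbar : r₀ ≤ rbar) :
    AntitoneOn (fun t => ∫ x in (0:ℝ)..rbar, fdist r₀ D₂ t x) (Set.Ioi 0) := by
  intro t1 ht1 t2 ht2 h12
  have ht1' : 0 < t1 := ht1
  have ht2' : 0 < t2 := ht2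
  simp only
  rw [integral_eq hr₀ hD₂ hrbar ht1', integral_eq hr₀ hD₂ hrbar ht2']
  exact Phi_anti hr₀ hrbar (Set.mem_Ioi.2 (Real.sqrt_pos.2 (by positivity)))
    (Set.mem_Ioi.2 (Real.sqrt_pos.2 (by positivity)))
    (Real.sqrt_le_sqrt (by nlinarith))
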